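/- Let R be a commutative unital ring, let A, B be rectangular matrices over R with A ≼_M B (Malcolmson subequivalent), let J be an ideal of R and k ∈ ℕ. If every k×k-minor of B lies in J, then every k×k-minor of A lies in J. -/

import Mathlib

open Matrix in
/-- The type of all rectangular matrices over `R`. -/
abbrev MatSig (R : Type) [Ring R] := Σ (n m : ℕ), Matrix (Fin n) (Fin m) R

open Matrix in
/-- The block diagonal-with-corner matrix `[[C, E], [0, D]]`, as an element of `MatSig R`. -/
def blockSig {R : Type} [Ring R] {p q r s : ℕ} (C : Matrix (Fin p) (Fin r) R)
    (E : Matrix (Fin p) (Fin s) R) (D : Matrix (Fin q) (Fin s) R) : MatSig R :=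
  ⟨p + q, r + s, Matrix.reindex finSumFinEquiv finSumFinEquiv (Matrix.fromBlocks C E 0 D)⟩

/-- One step of the Malcolmson relation: `A ≲ B` iff `A = C * B * D` for some `C, D`, or
`B = [[C, E], [0, D]]` and `A = [[C, 0], [0, D]]` for some `C, D, E`. -/
def MStep {R : Type} [Ring R] (A B : MatSig R) : Prop :=
  (∃ (C : Matrix (Fin A.1) (Fin B.1) R) (D : Matrix (Fin B.2.1) (Fin A.2.1) R),
      A.2.2 = C * B.2.2 * D) ∨
  (∃ (p q r s : ℕ) (C : Matrix (Fin p) (Fin r) R) (E : Matrix (Fin p) (Fin s) R)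
      (D : Matrix (Fin q) (Fin s) R), A = blockSig C 0 D ∧ B = blockSig C E D)

/-- Malcolmson subequivalence `A ≼_M B`: a finite chain of `MStep`s from `A` to `B`. -/
def Msub {R : Type} [Ring R] (A B : MatSig R) : Prop :=
  Relation.ReflTransGen (MStep (R := R)) A B

/-- A Sylvester matrix rank function for a unital ring `R`. -/
structure SylvesterRank (R : Type) [Ring R] where
  rk : MatSig R → ℝ
  rk_nonneg : ∀ A, 0 ≤ rk A
  rk_zero : rk ⟨1, 1, 0⟩ = 0
  rk_one : rk ⟨1, 1, 1⟩ = 1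
  rk_mul_le_left : ∀ {n m k : ℕ} (A : Matrix (Fin n) (Fin m) R) (B : Matrix (Fin m) (Fin k) R),
      rk ⟨n, k, A * B⟩ ≤ rk ⟨n, m, A⟩
  rk_mul_le_right : ∀ {n m k : ℕ} (A : Matrix (Fin n) (Fin m) R) (B : Matrix (Fin m) (Fin k) R),
      rk ⟨n, k, A * B⟩ ≤ rk ⟨m, k, B⟩
  rk_diag : ∀ {p q r s : ℕ} (A : Matrix (Fin p) (Fin r) R) (B : Matrix (Fin q) (Fin s) R),
      rk (blockSig A 0 B) = rk ⟨p, r, A⟩ + rk ⟨q, s, B⟩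
  rk_block_ge : ∀ {p q r s : ℕ} (A : Matrix (Fin p) (Fin r) R) (E : Matrix (Fin p) (Fin s) R)
      (B : Matrix (Fin q) (Fin s) R), rk ⟨p, r, A⟩ + rk ⟨q, s, B⟩ ≤ rk (blockSig A E B)

/-- The rank of a ring element, viewed as a `1 × 1` matrix. -/
noncomputable def SylvesterRank.rk1 {R : Type} [Ring R] (f : SylvesterRank R) (a : R) : ℝ :=
  f.rk ⟨1, 1, Matrix.of fun _ _ => a⟩


open Matrix Finset

section Aux
variable {R : Type} [CommRing R]

/-- Row expansion (Cauchy–Binet style): `det (X * W)` lies in any ideal containing all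
maximal minors `det (W.submatrix φ id)` for injective `φ`. -/
lemma rowexp (J : Ideal R) {k m : ℕ} (X : Matrix (Fin k) (Fin m) R)
    (W : Matrix (Fin m) (Fin k) R)
    (h : ∀ φ : Fin k → Fin m, Function.Injective φ → (W.submatrix φ id).det ∈ J) :
    (X * W).det ∈ J := by
  classical
  have hrows : ((X * W : Matrix (Fin k) (Fin k) R) : Fin k → Fin k → R)
      = fun i => ∑ l, X i l • W l := by
    ext i j
    simp [Matrix.mul_apply]
  have expand : (X * W).det
      = ∑ φ : Fin k → Fin m, (∏ i, X i (φ i)) • (W.submatrix φ id).det := by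
    have h1 : (X * W).det
        = Matrix.detRowAlternating (R := R) (fun i => ∑ l, X i l • W l) := by
      show Matrix.detRowAlternating (R := R) ((X * W : Matrix (Fin k) (Fin k) R)) = _
      rw [hrows]
    rw [h1]
    have h2 := (Matrix.detRowAlternating (R := R) (n := Fin k)).toMultilinearMap.map_sum
      (fun i l => X i l • W l)
    simp only [AlternatingMap.coe_multilinearMap] at h2
    rw [h2]
    refine Finset.sum_congr rfl fun φ _ => ?_
    have h3 := (Matrix.detRowAlternating (R := R) (n := Fin k)).toMultilinearMap.map_smul_univ
      (fun i => X i (φ i)) (fun i => W (φ i))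
    simp only [AlternatingMap.coe_multilinearMap] at h3
    have h4 : Matrix.detRowAlternating (R := R) (fun i => W (φ i))
        = (W.submatrix φ id).det := rfl
    rw [h3, h4]
  rw [expand]
  refine Ideal.sum_mem _ fun φ _ => ?_
  by_cases hφ : Function.Injective φ
  · rw [smul_eq_mul]
    exact J.mul_mem_left _ (h φ hφ)
  · obtain ⟨a, b, hab, hne⟩ := Function.not_injective_iff.mp hφ
    have hz : (W.submatrix φ id).det = 0 :=
      Matrix.det_zero_of_row_eq hne (by ext c; simp [hab])
    rw [hz, smul_zero]
    exact J.zero_mem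

/-- Column version of `rowexp`. -/
lemma colexp (J : Ideal R) {k m : ℕ} (V : Matrix (Fin k) (Fin m) R)
    (Y : Matrix (Fin m) (Fin k) R)
    (h : ∀ ψ : Fin k → Fin m, Function.Injective ψ → (V.submatrix id ψ).det ∈ J) :
    (V * Y).det ∈ J := by
  rw [← Matrix.det_transpose, Matrix.transpose_mul]
  refine rowexp J Yᵀ Vᵀ fun ψ hψ => ?_
  have : (Vᵀ.submatrix ψ id) = (V.submatrix id ψ)ᵀ := by
    ext i j; simp
  rw [this, Matrix.det_transpose]
  exact h ψ hψ

lemma mul3_det_mem (J : Ideal R) {k m m' : ℕ} (M : Matrix (Fin m) (Fin m') R)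
    (hM : ∀ (φ : Fin k → Fin m) (ψ : Fin k → Fin m'), Function.Injective φ →
      Function.Injective ψ → (M.submatrix φ ψ).det ∈ J)
    (X : Matrix (Fin k) (Fin m) R) (Y : Matrix (Fin m') (Fin k) R) :
    (X * M * Y).det ∈ J := by
  rw [Matrix.mul_assoc]
  refine rowexp J X (M * Y) fun φ hφ => ?_
  have h1 : (M * Y).submatrix φ id = (M.submatrix φ id) * Y := by
    ext i j; simp [Matrix.mul_apply]
  rw [h1]
  refine colexp J (M.submatrix φ id) Y fun ψ hψ => ?_
  have h2 : (M.submatrix φ id).submatrix id ψ = M.submatrix φ ψ := by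
    ext i j; simp
  rw [h2]
  exact hM φ ψ hφ hψ

/-- Abstract block-pattern lemma: if `M` vanishes on the "top-right" pattern where `N` may not,
both vanish on "bottom-left", and they agree elsewhere, then `det M ∈ J` whenever `det N ∈ J`. -/
lemma det_mem_of_pattern (J : Ideal R) {k : ℕ} (M N : Matrix (Fin k) (Fin k) R)
    (P Q : Fin k → Prop) [DecidablePred P] [DecidablePred Q]
    (hMtr : ∀ x y, P x → ¬ Q y → M x y = 0)
    (hbl : ∀ x y, ¬ P x → Q y → M x y = 0 ∧ N x y = 0)
    (hMN : ∀ x y, (P x ↔ Q y) → M x y = N x y)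
    (hN : N.det ∈ J) : M.det ∈ J := by
  classical
  have key : ∀ (σ : Equiv.Perm (Fin k)) (p : Fin k → Prop) (_ : DecidablePred p),
      (Finset.univ.filter fun i => p (σ i)).card = (Finset.univ.filter p).card := by
    intro σ p hp
    have himg : (Finset.univ.filter fun i => p (σ i))
        = (Finset.univ.filter p).image σ.symm := by
      ext x
      simp only [Finset.mem_image, Finset.mem_filter, Finset.mem_univ, true_and]
      constructor
      · intro hx; exact ⟨σ x, hx, σ.symm_apply_apply x⟩
      · rintro ⟨y, hy, rfl⟩; simpa using hy
    rw [himg, Finset.card_image_of_injective _ σ.symm.injective]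
  by_cases hc : (Finset.univ.filter P).card = (Finset.univ.filter Q).card
  · have hdet : M.det = N.det := by
      rw [Matrix.det_apply, Matrix.det_apply]
      refine Finset.sum_congr rfl fun σ _ => ?_
      congr 1
      by_cases hz : ∃ j, Q j ∧ ¬ P (σ j)
      · obtain ⟨j, hj, hpj⟩ := hz
        rw [Finset.prod_eq_zero (f := fun i => M (σ i) i) (Finset.mem_univ j)
              ((hbl _ _ hpj hj).1),
            Finset.prod_eq_zero (f := fun i => N (σ i) i) (Finset.mem_univ j)
              ((hbl _ _ hpj hj).2)]
      · push_neg at hz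
        have hsub : (Finset.univ.filter Q) ⊆ (Finset.univ.filter fun i => P (σ i)) := by
          intro x hx
          simp only [Finset.mem_filter, Finset.mem_univ, true_and] at hx ⊢
          exact hz x hx
        have heq : (Finset.univ.filter Q) = (Finset.univ.filter fun i => P (σ i)) :=
          Finset.eq_of_subset_of_card_le hsub (by rw [key σ P inferInstance, ← hc])
        have hiff : ∀ i, P (σ i) ↔ Q i := by
          intro i
          have := Finset.ext_iff.mp heq i
          simp only [Finset.mem_filter, Finset.mem_univ, true_and] at this
          exact this.symm
        exact Finset.prod_congr rfl fun i _ => hMN (σ i) i (hiff i)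
    rw [hdet]; exact hN
  · have hdet : M.det = 0 := by
      rw [Matrix.det_apply]
      refine Finset.sum_eq_zero fun σ _ => ?_
      have hzero : (∏ i, M (σ i) i) = 0 := by
        by_contra hne
        have hiff : ∀ i, P (σ i) ↔ Q i := by
          intro i
          constructor
          · intro hp; by_contra hq
            exact hne (Finset.prod_eq_zero (f := fun i => M (σ i) i) (Finset.mem_univ i)
              (hMtr _ _ hp hq))
          · intro hq; by_contra hp
            exact hne (Finset.prod_eq_zero (f := fun i => M (σ i) i) (Finset.mem_univ i)
              ((hbl _ _ hp hq).1))
        apply hc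
        rw [← key σ P inferInstance]
        congr 1
        ext i
        simp [hiff i]
      rw [hzero, smul_zero]
    rw [hdet]; exact J.zero_mem

end Aux

open Matrix in
lemma mstep_minors {R : Type} [CommRing R] {A B : MatSig R} (h : MStep A B)
    (J : Ideal R) (k : ℕ)
    (hB : ∀ (f : Fin k → Fin B.1) (g : Fin k → Fin B.2.1), Function.Injective f →
      Function.Injective g → (B.2.2.submatrix f g).det ∈ J) :
    ∀ (f : Fin k → Fin A.1) (g : Fin k → Fin A.2.1), Function.Injective f →
      Function.Injective g → (A.2.2.submatrix f g).det ∈ J := by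
  classical
  intro f g hf hg
  rcases h with ⟨C, D, hA⟩ | ⟨p, q, r, s, C, E, D, hA, hB'⟩
  · rw [hA]
    have hsub : (C * B.2.2 * D).submatrix f g
        = (C.submatrix f id) * B.2.2 * (D.submatrix id g) := by
      ext i j
      simp [Matrix.mul_apply]
    rw [hsub]
    exact mul3_det_mem J B.2.2 (fun φ ψ hφ hψ => hB φ ψ hφ hψ) _ _
  · subst hA; subst hB'
    show (((Matrix.reindex finSumFinEquiv finSumFinEquiv
      (Matrix.fromBlocks C 0 0 D)).submatrix f g)).det ∈ J
    change Fin k → Fin (p + q) at f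
    change Fin k → Fin (r + s) at g
    refine det_mem_of_pattern J _
      ((Matrix.reindex finSumFinEquiv finSumFinEquiv
        (Matrix.fromBlocks C E 0 D)).submatrix f g)
      (fun x => (finSumFinEquiv.symm (f x)).isLeft = true)
      (fun y => (finSumFinEquiv.symm (g y)).isLeft = true) ?_ ?_ ?_ (hB f g hf hg)
    · intro x y hx hy
      rcases h1 : finSumFinEquiv.symm (f x) with a | a <;>
        rcases h2 : finSumFinEquiv.symm (g y) with b | b <;>
        simp_all [Matrix.reindex_apply, Matrix.submatrix_apply]
    · intro x y hx hy
      rcases h1 : finSumFinEquiv.symm (f x) with a | a <;>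
        rcases h2 : finSumFinEquiv.symm (g y) with b | b <;>
        simp_all [Matrix.reindex_apply, Matrix.submatrix_apply]
    · intro x y hxy
      rcases h1 : finSumFinEquiv.symm (f x) with a | a <;>
        rcases h2 : finSumFinEquiv.symm (g y) with b | b <;>
        simp_all [Matrix.reindex_apply, Matrix.submatrix_apply]

/-- Lemma (minors): let `R` be a commutative unital ring, `A ≼_M B` rectangular matrices over
`R`, `J` an ideal of `R` and `k ∈ ℕ`. If every `k × k`-minor of `B` lies in `J`, then every
`k × k`-minor of `A` lies in `J`. -/
theorem stmt_5 {R : Type} [CommRing R] (A B : MatSig R) (hAB : Msub A B)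
    (J : Ideal R) (k : ℕ)
    (hB : ∀ (f : Fin k → Fin B.1) (g : Fin k → Fin B.2.1), Function.Injective f →
      Function.Injective g → (B.2.2.submatrix f g).det ∈ J) :
    ∀ (f : Fin k → Fin A.1) (g : Fin k → Fin A.2.1), Function.Injective f →
      Function.Injective g → (A.2.2.submatrix f g).det ∈ J := by
  induction hAB using Relation.ReflTransGen.head_induction_on with
  | refl => exact hB
  | head hstep _ ih => exact mstep_minors hstep J k ih
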